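/- For any x ∈ R^n, a minimizer of ⟨v, x⟩ over the K-norm ball of radius τ is achieved at whichever of the two points — the L1-ball-of-radius-τ LMO output or the hypercube-of-radius-τ/K LMO output — gives the smaller inner product with x; equivalently min over the K-norm ball equals min(−τ‖x‖_∞, −(τ/K)‖x‖_1). -/
import Mathlib


/-- For any x ∈ R^n, the minimum of ⟨v, x⟩ over the K-norm ball of radius τ,
conv(B_1(τ) ∪ B_∞(τ/K)), equals min(−τ‖x‖_∞, −(τ/K)‖x‖_1), i.e. it is attained at the
better of the L1-ball-of-radius-τ LMO output and the hypercube-of-radius-τ/K LMO output. -/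
theorem kNorm_ball_lmo {n K : ℕ} (hK1 : 1 ≤ K) (hKn : K ≤ n)
    (τ : ℝ) (hτ : 0 < τ) (x : Fin n → ℝ) :
    IsLeast {s : ℝ | ∃ v ∈ convexHull ℝ ({v : Fin n → ℝ | (∑ i, |v i|) ≤ τ} ∪
          {v : Fin n → ℝ | ∀ i, |v i| ≤ τ / K}),
        s = ∑ i, v i * x i}
      (min (-τ * ⨆ i, |x i|) (-(τ / K) * ∑ i, |x i|)) := by
  have hn : 0 < n := lt_of_lt_of_le hK1 hKn
  haveI : Nonempty (Fin n) := ⟨⟨0, hn⟩⟩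
  have hKpos : (0:ℝ) < K := by exact_mod_cast hK1
  have hτK : 0 < τ / K := div_pos hτ hKpos
  have hbdd : BddAbove (Set.range fun i => |x i|) := (Set.finite_range _).bddAbove
  set M := ⨆ i, |x i| with hM
  have hle : ∀ i, |x i| ≤ M := fun i => le_ciSup hbdd i
  have hM0 : 0 ≤ M := le_trans (abs_nonneg _) (hle (Classical.arbitrary _))
  constructor
  · rcases le_total (-τ * M) (-(τ/K) * ∑ i, |x i|) with h | h
    · obtain ⟨i0, hi0⟩ := Finite.exists_max fun i => |x i|
      have hMeq : M = |x i0| := le_antisymm (ciSup_le hi0) (hle i0)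
      refine ⟨fun i => if i = i0 then (if 0 ≤ x i0 then -τ else τ) else 0, ?_, ?_⟩
      · apply subset_convexHull; left
        simp only [Set.mem_setOf_eq]
        have habs : ∀ i, |if i = i0 then (if 0 ≤ x i0 then -τ else τ) else 0| =
            if i = i0 then τ else 0 := by
          intro i
          split
          · split <;> simp [abs_of_pos hτ]
          · simp
        rw [Finset.sum_congr rfl fun i _ => habs i]
        simp
      · rw [min_eq_left h]
        have hterm : ∀ i ∈ Finset.univ,
            (if i = i0 then (if 0 ≤ x i0 then -τ else τ) else 0) * x i
              = if i = i0 then (-τ * |x i0|) else 0 := by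
          intro i _
          by_cases hii : i = i0
          · subst hii
            simp only [if_pos rfl]
            by_cases h0 : 0 ≤ x i
            · rw [if_pos h0, abs_of_nonneg h0]; simp
            · rw [if_neg h0, abs_of_neg (lt_of_not_ge h0)]; simp [mul_comm]
          · simp [hii]
        rw [Finset.sum_congr rfl hterm, Finset.sum_ite_eq' Finset.univ i0 fun _ => -τ * |x i0|]
        simp [hMeq]
    · refine ⟨fun i => if 0 ≤ x i then -(τ/K) else τ/K, ?_, ?_⟩
      · apply subset_convexHull; right
        intro i
        simp only
        split <;> simp [abs_of_pos hτK, le_of_lt]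
      · rw [min_eq_right h]
        have hterm : ∀ i ∈ Finset.univ,
            (if 0 ≤ x i then -(τ/K) else τ/K) * x i = -(τ/K) * |x i| := by
          intro i _
          by_cases h0 : 0 ≤ x i
          · rw [if_pos h0, abs_of_nonneg h0]
          · rw [if_neg h0, abs_of_neg (lt_of_not_ge h0)]; ring
        rw [Finset.sum_congr rfl hterm, ← Finset.mul_sum]
  · rintro s ⟨v, hv, rfl⟩
    set c := min (-τ * M) (-(τ/K) * ∑ i, |x i|) with hc
    have hlin : IsLinearMap ℝ (fun v : Fin n → ℝ => ∑ i, v i * x i) := by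
      constructor
      · intro a b; simp [add_mul, Finset.sum_add_distrib]
      · intro r a; simp [Finset.mul_sum, mul_assoc]
    have hsub : ({v : Fin n → ℝ | (∑ i, |v i|) ≤ τ} ∪
          {v : Fin n → ℝ | ∀ i, |v i| ≤ τ / K}) ⊆ {w | c ≤ ∑ i, w i * x i} := by
      rintro w (hw | hw) <;> simp only [Set.mem_setOf_eq]
      · refine le_trans (min_le_left _ _) ?_
        have h1 : ∀ i ∈ Finset.univ, -(|w i| * M) ≤ w i * x i := by
          intro i _
          have h2 : |w i * x i| ≤ |w i| * M := by
            rw [abs_mul]; exact mul_le_mul_of_nonneg_left (hle i) (abs_nonneg _)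
          have := neg_abs_le (w i * x i)
          linarith
        calc -τ * M ≤ -(∑ i, |w i|) * M :=
              mul_le_mul_of_nonneg_right (neg_le_neg hw) hM0
          _ = ∑ i, -(|w i| * M) := by simp [Finset.sum_mul]
          _ ≤ ∑ i, w i * x i := Finset.sum_le_sum h1
      · refine le_trans (min_le_right _ _) ?_
        have h1 : ∀ i ∈ Finset.univ, -(τ/K * |x i|) ≤ w i * x i := by
          intro i _
          have h2 : |w i * x i| ≤ τ/K * |x i| := by
            rw [abs_mul]; exact mul_le_mul_of_nonneg_right (hw i) (abs_nonneg _)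
          have := neg_abs_le (w i * x i)
          linarith
        calc -(τ/K) * (∑ i, |x i|) = ∑ i, -(τ/K * |x i|) := by simp [Finset.mul_sum]
          _ ≤ ∑ i, w i * x i := Finset.sum_le_sum h1
    exact convexHull_min hsub (convex_halfSpace_ge hlin c) hv
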